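/- Let Ω be a finite probability space with probability measure μ (all subsets measurable), Y0, Y1 : Ω → ℝ random variables (the potential outcomes), T : Ω → Bool a treatment indicator, and B : Ω → β a grouping function with β finite. Assume that for every group b ∈ β with μ {B = b} > 0: (i) under the conditioned measure μ[·|{B = b}], the pair (Y0, Y1) and T are independent (IndepFun), and (ii) 0 < μ[{T = true} | {B = b}] < 1. Then the average treatment effect satisfies ∫ (Y1 − Y0) dμ = ∑_{b : μ{B=b}>0} μ {B = b} · ( E[Y1 | {T = true} ∩ {B = b}] − E[Y0 | {T = false} ∩ {B = b}] ). -/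

import Mathlib

open MeasureTheory ProbabilityTheory

section Aux

variable {Ω : Type*} [Fintype Ω] [MeasurableSpace Ω] [MeasurableSingletonClass Ω]

lemma aux_integral_cond (μ : Measure Ω) (s : Set Ω) (f : Ω → ℝ) :
    ∫ ω, f ω ∂(μ[|s]) = (μ s).toReal⁻¹ * ∫ ω in s, f ω ∂μ := by
  rw [ProbabilityTheory.cond, integral_smul_measure, ENNReal.toReal_inv, smul_eq_mul]

/-- Total expectation over the partition by `B`. -/
lemma aux_total (μ : Measure Ω) [IsProbabilityMeasure μ] {β : Type*} [Fintype β]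
    (B : Ω → β) (f : Ω → ℝ) [DecidablePred fun b : β => 0 < μ {ω | B ω = b}] :
    ∫ ω, f ω ∂μ =
      ∑ b ∈ Finset.univ.filter (fun b : β => 0 < μ {ω | B ω = b}),
        (μ {ω | B ω = b}).toReal * ∫ ω, f ω ∂(μ[|{ω | B ω = b}]) := by
  have hmeas : ∀ s : Set Ω, MeasurableSet s := fun s => (Set.toFinite s).measurableSet
  have hunion : (⋃ b ∈ (Finset.univ : Finset β), {ω | B ω = b}) = Set.univ := by
    ext ω; simp
  have hdisj : (↑(Finset.univ : Finset β) : Set β).Pairwise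
      (Function.onFun Disjoint fun b => {ω | B ω = b}) := by
    intro a _ b _ hab
    exact Set.disjoint_left.2 fun ω ha hb => hab (ha ▸ hb ▸ rfl)
  calc ∫ ω, f ω ∂μ = ∫ ω in ⋃ b ∈ (Finset.univ : Finset β), {ω | B ω = b}, f ω ∂μ := by
        rw [hunion, Measure.restrict_univ]
    _ = ∑ b ∈ Finset.univ, ∫ ω in {ω | B ω = b}, f ω ∂μ := by
        exact integral_biUnion_finset _ (fun b _ => hmeas _) hdisj
          (fun b _ => (Integrable.of_finite).integrableOn)
    _ = ∑ b ∈ Finset.univ.filter (fun b : β => 0 < μ {ω | B ω = b}),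
          ∫ ω in {ω | B ω = b}, f ω ∂μ := by
        refine (Finset.sum_subset (Finset.filter_subset _ _) ?_).symm
        intro b _ hb
        have h0 : μ {ω | B ω = b} = 0 := by
          by_contra h
          exact hb (Finset.mem_filter.2 ⟨Finset.mem_univ b, pos_iff_ne_zero.2 h⟩)
        rw [Measure.restrict_eq_zero.2 h0, integral_zero_measure]
    _ = _ := by
        refine Finset.sum_congr rfl fun b hb => ?_
        have hpos := (Finset.mem_filter.1 hb).2
        rw [aux_integral_cond, ← mul_assoc, mul_inv_cancel₀, one_mul]
        exact ENNReal.toReal_ne_zero.2 ⟨pos_iff_ne_zero.1 hpos, measure_ne_top μ _⟩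

/-- Under independence, conditioning on the treatment value does not change the mean. -/
lemma aux_indep (ν : Measure Ω) [IsProbabilityMeasure ν] (X : Ω → ℝ) (T : Ω → Bool)
    (h : IndepFun X T ν) (t : Bool) (ht : ν {ω | T ω = t} ≠ 0) :
    ∫ ω, X ω ∂(ν[|{ω | T ω = t}]) = ∫ ω, X ω ∂ν := by
  have hmeas : ∀ s : Set Ω, MeasurableSet s := fun s => (Set.toFinite s).measurableSet
  set A : Set Ω := {ω | T ω = t}
  have hind : ({ω | T ω = t} : Set Ω).indicator X
      = fun ω => X ω * (fun b : Bool => if b = t then (1:ℝ) else 0) (T ω) := by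
    ext ω
    by_cases hω : T ω = t <;> simp [Set.indicator, hω]
  have hIndep2 : IndepFun X ((fun b : Bool => if b = t then (1:ℝ) else 0) ∘ T) ν :=
    h.comp measurable_id (measurable_of_countable _)
  have hmul : ∫ ω, X ω * (fun b : Bool => if b = t then (1:ℝ) else 0) (T ω) ∂ν
      = (∫ ω, X ω ∂ν) * ∫ ω, (fun b : Bool => if b = t then (1:ℝ) else 0) (T ω) ∂ν :=
    hIndep2.integral_fun_mul_eq_mul_integral (Integrable.of_finite).aestronglyMeasurable
      (Integrable.of_finite).aestronglyMeasurable
  have hindicator : (fun ω => (fun b : Bool => if b = t then (1:ℝ) else 0) (T ω))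
      = fun ω => ({ω | T ω = t} : Set Ω).indicator (1 : Ω → ℝ) ω := by
    ext ω
    by_cases hω : T ω = t <;> simp [Set.indicator, hω]
  rw [aux_integral_cond, ← integral_indicator (hmeas _), hind, hmul, hindicator,
    integral_indicator_one (hmeas _), measureReal_def, mul_comm, mul_assoc,
    mul_inv_cancel₀ (ENNReal.toReal_ne_zero.2 ⟨ht, measure_ne_top ν _⟩), mul_one]

end Aux

open scoped Classical in
/-- Subclassification identity: if treatment assignment is strongly ignorable within each
group defined by `B` (within-group independence of the potential outcomes and the treatment,
and within-group overlap), then the average treatment effect is the group-probability-weighted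
average of the within-group treated/control mean differences. -/
theorem ate_eq_subclassification
    {Ω : Type*} [Fintype Ω] [MeasurableSpace Ω] [MeasurableSingletonClass Ω]
    {β : Type*} [Fintype β]
    (μ : Measure Ω) [IsProbabilityMeasure μ]
    (Y0 Y1 : Ω → ℝ) (T : Ω → Bool) (B : Ω → β)
    (hindep : ∀ b : β, 0 < μ {ω | B ω = b} →
      IndepFun (fun ω => (Y0 ω, Y1 ω)) T (μ[|{ω | B ω = b}]))
    (hoverlap : ∀ b : β, 0 < μ {ω | B ω = b} →
      0 < (μ[|{ω | B ω = b}]) {ω | T ω = true} ∧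
      (μ[|{ω | B ω = b}]) {ω | T ω = true} < 1) :
    ∫ ω, (Y1 ω - Y0 ω) ∂μ =
      ∑ b ∈ Finset.univ.filter (fun b : β => 0 < μ {ω | B ω = b}),
        (μ {ω | B ω = b}).toReal *
          ((∫ ω, Y1 ω ∂(μ[|{ω | T ω = true} ∩ {ω | B ω = b}])) -
            ∫ ω, Y0 ω ∂(μ[|{ω | T ω = false} ∩ {ω | B ω = b}])) := by
  have hmeas : ∀ s : Set Ω, MeasurableSet s := fun s => (Set.toFinite s).measurableSet
  rw [aux_total μ B (fun ω => Y1 ω - Y0 ω)]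
  refine Finset.sum_congr rfl fun b hb => ?_
  have hpos : 0 < μ {ω | B ω = b} := (Finset.mem_filter.1 hb).2
  set ν := μ[|{ω | B ω = b}] with hν
  haveI : IsProbabilityMeasure ν :=
    cond_isProbabilityMeasure (pos_iff_ne_zero.1 hpos)
  have hov := hoverlap b hpos
  have htt : ν {ω | T ω = true} ≠ 0 := pos_iff_ne_zero.1 hov.1
  have hff : ν {ω | T ω = false} ≠ 0 := by
    have hc : ({ω | T ω = false} : Set Ω) = {ω | T ω = true}ᶜ := by
      ext ω; cases h : T ω <;> simp [h]
    rw [hc, prob_compl_eq_one_sub (hmeas _)]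
    intro h
    have := tsub_eq_zero_iff_le.1 h
    exact absurd this (not_le.2 hov.2)
  have hY1 : IndepFun Y1 T ν := (hindep b hpos).comp measurable_snd measurable_id
  have hY0 : IndepFun Y0 T ν := (hindep b hpos).comp measurable_fst measurable_id
  have e1 : ∫ ω, Y1 ω ∂(μ[|{ω | T ω = true} ∩ {ω | B ω = b}]) = ∫ ω, Y1 ω ∂ν := by
    rw [Set.inter_comm, ← cond_cond_eq_cond_inter (hmeas _) (hmeas _) μ]
    exact aux_indep ν Y1 T hY1 true htt
  have e0 : ∫ ω, Y0 ω ∂(μ[|{ω | T ω = false} ∩ {ω | B ω = b}]) = ∫ ω, Y0 ω ∂ν := by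
    rw [Set.inter_comm, ← cond_cond_eq_cond_inter (hmeas _) (hmeas _) μ]
    exact aux_indep ν Y0 T hY0 false hff
  rw [e1, e0, integral_sub Integrable.of_finite Integrable.of_finite]
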